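/- The proof system K⊞ is sound and strongly complete with respect to the class of serial bimodal frames: for every set Γ of L(⊞)-formulas and every L(⊞)-formula φ, Γ ⊢_{K⊞} φ if and only if every pointed serial bimodal model that satisfies all formulas of Γ also satisfies φ. -/

import Mathlib

/-- Formulas of the language L(⊞): propositional variables, ¬, ∧, and ⊞ (`pbox`). -/
inductive Form : Type
  | var : ℕ → Form
  | neg : Form → Form
  | conj : Form → Form → Form
  | pbox : Form → Form

namespace Form
/-- Implication, defined as usual. -/
def imp (φ ψ : Form) : Form := neg (conj φ (neg ψ))
/-- Disjunction, defined as usual. -/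
def disj (φ ψ : Form) : Form := neg (conj (neg φ) (neg ψ))
/-- Biconditional, defined as usual. -/
def biff (φ ψ : Form) : Form := conj (imp φ ψ) (imp ψ φ)
end Form

/-- A bimodal model: a nonempty set of worlds, two accessibility relations and a valuation. -/
structure BiModel : Type 1 where
  S : Type
  ne : Nonempty S
  R1 : S → S → Prop
  R2 : S → S → Prop
  V : ℕ → Set S

/-- Truth of a formula at a world: ⊞φ holds at s iff either φ holds at all
R1-successors of s, or ¬φ holds at all R2-successors of s. -/
def sat (M : BiModel) : M.S → Form → Prop
  | s, .var n => s ∈ M.V n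
  | s, .neg φ => ¬ sat M s φ
  | s, .conj φ ψ => sat M s φ ∧ sat M s ψ
  | s, .pbox φ => (∀ t, M.R1 s t → sat M t φ) ∨ (∀ u, M.R2 s u → ¬ sat M u φ)

/-- Boolean evaluation treating ⊞-formulas as atoms (for defining tautologies). -/
def beval (v : Form → Bool) : Form → Bool
  | .var n => v (.var n)
  | .neg φ => !beval v φ
  | .conj φ ψ => beval v φ && beval v ψ
  | .pbox φ => v (.pbox φ)

/-- φ is an instance of a propositional tautology. -/
def Form.isTaut (φ : Form) : Prop := ∀ v : Form → Bool, beval v φ = true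

/-- Theorems of the minimal system K⊞: propositional tautologies, CON⊞, DIS⊞,
closed under modus ponens, RN⊞ and RE⊞. -/
inductive KPThm : Form → Prop
  | taut {φ : Form} : φ.isTaut → KPThm φ
  | con (φ ψ : Form) :
      KPThm (((Form.pbox φ).conj (Form.pbox ψ)).imp
        ((Form.pbox (φ.conj ψ)).conj (Form.pbox (φ.disj ψ))))
  | dis (φ ψ χ : Form) :
      KPThm ((Form.pbox φ).imp
        ((Form.pbox (φ.disj ψ)).disj (Form.pbox (φ.conj χ))))
  | mp {φ ψ : Form} : KPThm (φ.imp ψ) → KPThm φ → KPThm ψ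
  | rn {φ : Form} : KPThm φ → KPThm ((Form.pbox φ).conj (Form.pbox (Form.neg φ)))
  | re {φ ψ : Form} : KPThm (φ.biff ψ) → KPThm ((Form.pbox φ).biff (Form.pbox ψ))

/-- Γ ⊢_{K⊞} φ: φ is derivable from theorems of K⊞ together with premises in Γ
using modus ponens. -/
inductive PDeriv (Γ : Set Form) : Form → Prop
  | thm {φ : Form} : KPThm φ → PDeriv Γ φ
  | prem {φ : Form} : φ ∈ Γ → PDeriv Γ φ
  | mp {φ ψ : Form} : PDeriv Γ (φ.imp ψ) → PDeriv Γ φ → PDeriv Γ ψ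

/-- A model is serial if both relations are serial. -/
def SerialM (M : BiModel) : Prop := (∀ s, ∃ t, M.R1 s t) ∧ (∀ s, ∃ t, M.R2 s t)

open Classical

namespace KP

@[simp] lemma beval_neg (v : Form → Bool) (φ : Form) : beval v (Form.neg φ) = !beval v φ := rfl
@[simp] lemma beval_conj (v : Form → Bool) (φ ψ : Form) :
    beval v (Form.conj φ ψ) = (beval v φ && beval v ψ) := rfl
@[simp] lemma beval_imp (v : Form → Bool) (φ ψ : Form) :
    beval v (Form.imp φ ψ) = (!(beval v φ && !beval v ψ)) := rfl
@[simp] lemma beval_disj (v : Form → Bool) (φ ψ : Form) :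
    beval v (Form.disj φ ψ) = (!(!beval v φ && !beval v ψ)) := rfl
@[simp] lemma beval_biff (v : Form → Bool) (φ ψ : Form) :
    beval v (Form.biff φ ψ) = ((!(beval v φ && !beval v ψ)) && (!(beval v ψ && !beval v φ))) := rfl

def fls : Form := (Form.var 0).conj ((Form.var 0).neg)
def top : Form := fls.neg

@[simp] lemma beval_fls (v : Form → Bool) : beval v fls = false := by simp [fls, beval]
@[simp] lemma beval_top (v : Form → Bool) : beval v top = true := by simp [top]

lemma t_id (φ : Form) : (φ.imp φ).isTaut := by
  intro v; cases h1 : beval v φ <;> simp [h1]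
lemma t_k {φ ψ : Form} : (ψ.imp (φ.imp ψ)).isTaut := by
  intro v; cases h1 : beval v φ <;> cases h2 : beval v ψ <;> simp [h1, h2]
lemma t_s {φ χ ψ : Form} :
    ((φ.imp (χ.imp ψ)).imp ((φ.imp χ).imp (φ.imp ψ))).isTaut := by
  intro v; cases h1 : beval v φ <;> cases h2 : beval v ψ <;> cases h3 : beval v χ <;> simp [h1, h2, h3]
lemma t_top : top.isTaut := by intro v; simp
lemma t_and_left {φ ψ : Form} : ((φ.conj ψ).imp φ).isTaut := by
  intro v; cases h1 : beval v φ <;> cases h2 : beval v ψ <;> simp [h1, h2]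
lemma t_and_right {φ ψ : Form} : ((φ.conj ψ).imp ψ).isTaut := by
  intro v; cases h1 : beval v φ <;> cases h2 : beval v ψ <;> simp [h1, h2]
lemma t_and_intro {φ ψ : Form} : (φ.imp (ψ.imp (φ.conj ψ))).isTaut := by
  intro v; cases h1 : beval v φ <;> cases h2 : beval v ψ <;> simp [h1, h2]
lemma t_dne {φ : Form} : (((φ.neg).imp fls).imp φ).isTaut := by
  intro v; cases h1 : beval v φ <;> simp [h1]
lemma t_explode {φ : Form} : (φ.imp ((φ.neg).imp fls)).isTaut := by
  intro v; cases h1 : beval v φ <;> simp [h1]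
lemma t_negI {φ : Form} : ((φ.imp fls).imp (φ.neg)).isTaut := by
  intro v; cases h1 : beval v φ <;> simp [h1]
lemma t_disj_elim {φ ψ : Form} : ((φ.disj ψ).imp ((φ.neg).imp ψ)).isTaut := by
  intro v; cases h1 : beval v φ <;> cases h2 : beval v ψ <;> simp [h1, h2]
lemma t_disj_inl {φ ψ : Form} : (φ.imp (φ.disj ψ)).isTaut := by
  intro v; cases h1 : beval v φ <;> cases h2 : beval v ψ <;> simp [h1, h2]
lemma t_disj_inr {φ ψ : Form} : (ψ.imp (φ.disj ψ)).isTaut := by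
  intro v; cases h1 : beval v φ <;> cases h2 : beval v ψ <;> simp [h1, h2]

-- schemas for A/B closure
lemma t_up1 {c θ : Form} : ((c.imp θ).imp (θ.biff (c.disj θ))).isTaut := by
  intro v; cases h1 : beval v c <;> cases h2 : beval v θ <;> simp [h1, h2]
lemma t_up2 {c θ ψ : Form} :
    ((c.imp θ).imp ((θ.disj ψ).biff (c.disj (θ.disj ψ)))).isTaut := by
  intro v; cases h1 : beval v c <;> cases h2 : beval v θ <;> cases h3 : beval v ψ <;> simp [h1, h2, h3]
lemma t_down1 {θ d : Form} : ((θ.imp d).imp (θ.biff (d.conj θ))).isTaut := by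
  intro v; cases h1 : beval v d <;> cases h2 : beval v θ <;> simp [h1, h2]
lemma t_down2 {θ d χ : Form} :
    ((θ.imp d).imp ((θ.conj χ).biff (d.conj (θ.conj χ)))).isTaut := by
  intro v; cases h1 : beval v d <;> cases h2 : beval v θ <;> cases h3 : beval v χ <;> simp [h1, h2, h3]
lemma t_distrib1 {φ φ' ψ : Form} :
    (((φ.conj φ').disj ψ).biff ((φ.disj ψ).conj (φ'.disj ψ))).isTaut := by
  intro v; cases h1 : beval v φ <;> cases h2 : beval v φ' <;> cases h3 : beval v ψ <;> simp [h1, h2, h3]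
lemma t_distrib2 {φ φ' χ : Form} :
    (((φ.disj φ').conj χ).biff ((φ.conj χ).disj (φ'.conj χ))).isTaut := by
  intro v; cases h1 : beval v φ <;> cases h2 : beval v φ' <;> cases h3 : beval v χ <;> simp [h1, h2, h3]
lemma t_fls_negtop : (fls.biff (top.neg)).isTaut := by intro v; simp
lemma t_flsconj {χ : Form} : ((fls.conj χ).biff (top.neg)).isTaut := by intro v; simp
lemma t_flsdisj {ψ : Form} : ((fls.disj ψ).biff ψ).isTaut := by
  intro v; cases h1 : beval v ψ <;> simp [h1]
lemma t_biff_mp {φ ψ : Form} : ((φ.biff ψ).imp (φ.imp ψ)).isTaut := by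
  intro v; cases h1 : beval v φ <;> cases h2 : beval v ψ <;> simp [h1, h2]
lemma t_biff_mpr {φ ψ : Form} : ((φ.biff ψ).imp (ψ.imp φ)).isTaut := by
  intro v; cases h1 : beval v φ <;> cases h2 : beval v ψ <;> simp [h1, h2]
-- conjList deduction shuffle
lemma t_shuffle {c a θ : Form} : ((c.imp (a.imp θ)).imp ((a.conj c).imp θ)).isTaut := by
  intro v; cases h1 : beval v c <;> cases h2 : beval v a <;> cases h3 : beval v θ <;> simp [h1, h2, h3]
lemma t_nilstep {p : Form} : ((top.imp (p.imp fls)).imp (p.imp fls)).isTaut := by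
  intro v; cases h1 : beval v p <;> simp [h1]
lemma t_cons1 {a c p : Form} :
    ((((a.neg).conj c).imp (p.imp fls)).imp (c.imp ((p.conj (a.neg)).imp fls))).isTaut := by
  intro v; cases h1 : beval v a <;> cases h2 : beval v c <;> cases h3 : beval v p <;> simp [h1, h2, h3]
lemma t_cons2 {a d p : Form} :
    (((p.conj (a.neg)).imp d).imp (p.imp (a.disj d))).isTaut := by
  intro v; cases h1 : beval v a <;> cases h2 : beval v d <;> cases h3 : beval v p <;> simp [h1, h2, h3]
lemma t_topconj {d χ : Form} : (d.imp ((d.conj χ).biff χ)).isTaut := by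
  intro v; cases h1 : beval v d <;> cases h2 : beval v χ <;> simp [h1, h2]

end KP
namespace KP
lemma t_topdisj {ψ : Form} : (top.disj ψ).isTaut := by intro v; simp
end KP
namespace KP

lemma kthm {φ : Form} (h : φ.isTaut) : KPThm φ := KPThm.taut h

lemma pd_mono {Γ Γ' : Set Form} {φ : Form} (h : PDeriv Γ φ) (hs : Γ ⊆ Γ') :
    PDeriv Γ' φ := by
  induction h with
  | thm h => exact .thm h
  | prem h => exact .prem (hs h)
  | mp _ _ ih1 ih2 => exact .mp ih1 ih2

lemma pd_taut {Γ : Set Form} {φ : Form} (h : φ.isTaut) : PDeriv Γ φ := .thm (.taut h)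

lemma deduction {Γ : Set Form} {φ ψ : Form} (h : PDeriv (insert φ Γ) ψ) :
    PDeriv Γ (φ.imp ψ) := by
  induction h with
  | thm h => exact .mp (pd_taut t_k) (.thm h)
  | prem h =>
    rcases Set.mem_insert_iff.mp h with rfl | h
    · exact pd_taut (t_id _)
    · exact .mp (pd_taut t_k) (.prem h)
  | mp _ _ ih1 ih2 => exact .mp (.mp (pd_taut t_s) ih1) ih2

lemma compact {Γ : Set Form} {φ : Form} (h : PDeriv Γ φ) :
    ∃ F : Finset Form, ↑F ⊆ Γ ∧ PDeriv (↑F : Set Form) φ := by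
  induction h with
  | thm h => exact ⟨∅, by simp, .thm h⟩
  | @prem ψ h => exact ⟨{ψ}, by simpa using h, .prem (by simp)⟩
  | mp _ _ ih1 ih2 =>
    obtain ⟨F1, hF1, d1⟩ := ih1
    obtain ⟨F2, hF2, d2⟩ := ih2
    refine ⟨F1 ∪ F2, ?_, .mp (pd_mono d1 ?_) (pd_mono d2 ?_)⟩
    · intro x hx; rcases Finset.mem_union.mp (by exact_mod_cast hx) with h | h
      · exact hF1 h
      · exact hF2 h
    · intro x hx; exact_mod_cast Finset.mem_union_left _ (by exact_mod_cast hx)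
    · intro x hx; exact_mod_cast Finset.mem_union_right _ (by exact_mod_cast hx)

def Cons (Γ : Set Form) : Prop := ¬ PDeriv Γ fls

def MCS (Γ : Set Form) : Prop := Cons Γ ∧ ∀ φ, φ ∉ Γ → ¬ Cons (insert φ Γ)

lemma pderiv_of_empty {Γ : Set Form} {φ : Form} (h : PDeriv Γ φ) (he : ∀ x, x ∉ Γ) :
    KPThm φ := by
  induction h with
  | thm h => exact h
  | prem h => exact absurd h (he _)
  | mp _ _ ih1 ih2 => exact .mp ih1 ih2

section MCSlem
variable {Δ : Set Form} (hΔ : MCS Δ)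
include hΔ

lemma mem_of_deriv {φ : Form} (h : PDeriv Δ φ) : φ ∈ Δ := by
  by_contra hn
  have := hΔ.2 φ hn
  have hd : PDeriv (insert φ Δ) fls := not_not.mp this
  exact hΔ.1 (.mp (deduction hd) h)

lemma thm_mem {φ : Form} (h : KPThm φ) : φ ∈ Δ := mem_of_deriv hΔ (.thm h)

lemma mp_mem {φ ψ : Form} (h : φ.imp ψ ∈ Δ) (h2 : φ ∈ Δ) : ψ ∈ Δ :=
  mem_of_deriv hΔ (.mp (.prem h) (.prem h2))

lemma neg_mem_iff {φ : Form} : φ.neg ∈ Δ ↔ φ ∉ Δ := by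
  constructor
  · intro h hn
    exact hΔ.1 (.mp (.mp (pd_taut t_explode) (.prem hn)) (.prem h))
  · intro h
    have hd : PDeriv (insert φ Δ) fls := not_not.mp (hΔ.2 φ h)
    exact mem_of_deriv hΔ (.mp (pd_taut t_negI) (deduction hd))

lemma conj_mem_iff {φ ψ : Form} : φ.conj ψ ∈ Δ ↔ φ ∈ Δ ∧ ψ ∈ Δ := by
  constructor
  · intro h
    exact ⟨mp_mem hΔ (thm_mem hΔ (kthm t_and_left)) h,
           mp_mem hΔ (thm_mem hΔ (kthm t_and_right)) h⟩
  · rintro ⟨h1, h2⟩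
    exact mp_mem hΔ (mp_mem hΔ (thm_mem hΔ (kthm t_and_intro)) h1) h2

lemma disj_elim_mem {φ ψ : Form} (h : φ.disj ψ ∈ Δ) : φ ∈ Δ ∨ ψ ∈ Δ := by
  by_cases hφ : φ ∈ Δ
  · exact Or.inl hφ
  · refine Or.inr ?_
    have hn : φ.neg ∈ Δ := (neg_mem_iff hΔ).mpr hφ
    exact mp_mem hΔ (mp_mem hΔ (thm_mem hΔ (kthm t_disj_elim)) h) hn

lemma biff_mem {φ ψ : Form} (h : KPThm (φ.biff ψ)) : (φ ∈ Δ ↔ ψ ∈ Δ) := by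
  constructor
  · exact mp_mem hΔ (thm_mem hΔ (.mp (kthm t_biff_mp) h))
  · exact mp_mem hΔ (thm_mem hΔ (.mp (kthm t_biff_mpr) h))

end MCSlem

lemma lindenbaum {Γ : Set Form} (h : Cons Γ) : ∃ Δ, Γ ⊆ Δ ∧ MCS Δ := by
  have hz : ∀ c ⊆ {Γ' | Cons Γ'}, IsChain (· ⊆ ·) c → c.Nonempty →
      ∃ ub ∈ {Γ' | Cons Γ'}, ∀ s ∈ c, s ⊆ ub := by
    intro c hc hchain hne
    refine ⟨⋃₀ c, ?_, fun s hs => Set.subset_sUnion_of_mem hs⟩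
    intro hd
    obtain ⟨F, hF, hdF⟩ := compact hd
    have : Nonempty c := hne.to_subtype
    have hdir : Directed (· ⊆ ·) (fun x : c => (x : Set Form)) :=
      directedOn_iff_directed.mp hchain.directedOn
    have hsub' : ↑F ⊆ ⋃ (x : c), (x : Set Form) := by
      rwa [← Set.sUnion_eq_iUnion]
    obtain ⟨⟨Γ', hΓ'⟩, hFs⟩ := hdir.exists_mem_subset_of_finset_subset_biUnion hsub'
    exact (hc hΓ') (pd_mono hdF hFs)
  obtain ⟨m, hm, hmax⟩ := zorn_subset_nonempty {Γ' | Cons Γ'} hz Γ h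
  refine ⟨m, hm, hmax.1, ?_⟩
  intro φ hφ hc
  exact hφ (hmax.2 hc (Set.subset_insert _ _) (Set.mem_insert φ m))

def conjList : List Form → Form
  | [] => top
  | a :: L => a.conj (conjList L)

def disjList : List Form → Form
  | [] => fls
  | a :: L => a.disj (disjList L)

lemma deriv_list {θ : Form} : ∀ L : List Form,
    PDeriv {x | x ∈ L} θ → KPThm ((conjList L).imp θ)
  | [], h => by
    have : KPThm θ := pderiv_of_empty h (by simp)
    exact .mp (kthm t_k) this
  | a :: L, h => by
    have he : {x | x ∈ a :: L} = insert a {x | x ∈ L} := by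
      ext x; simp [List.mem_cons]
    rw [he] at h
    have ih := deriv_list L (deduction h)
    exact .mp (kthm t_shuffle) ih

lemma neg_list : ∀ (L : List Form) (p : Form),
    KPThm ((conjList (L.map Form.neg)).imp (p.imp fls)) → KPThm (p.imp (disjList L))
  | [], p, h => .mp (kthm t_nilstep) h
  | a :: L, p, h => by
    have h1 : KPThm ((conjList (L.map Form.neg)).imp ((p.conj a.neg).imp fls)) :=
      .mp (kthm t_cons1) h
    have h2 := neg_list L (p.conj a.neg) h1
    exact .mp (kthm t_cons2) h2

end KP
namespace KP

@[simp] lemma sat_neg {M : BiModel} {s : M.S} {φ : Form} :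
    sat M s (Form.neg φ) ↔ ¬ sat M s φ := Iff.rfl
@[simp] lemma sat_conj {M : BiModel} {s : M.S} {φ ψ : Form} :
    sat M s (Form.conj φ ψ) ↔ sat M s φ ∧ sat M s ψ := Iff.rfl
lemma sat_pbox {M : BiModel} {s : M.S} {φ : Form} :
    sat M s (Form.pbox φ) ↔
      ((∀ t, M.R1 s t → sat M t φ) ∨ (∀ u, M.R2 s u → ¬ sat M u φ)) := Iff.rfl
@[simp] lemma sat_imp {M : BiModel} {s : M.S} {φ ψ : Form} :
    sat M s (Form.imp φ ψ) ↔ (sat M s φ → sat M s ψ) := by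
  simp [Form.imp]
@[simp] lemma sat_disj {M : BiModel} {s : M.S} {φ ψ : Form} :
    sat M s (Form.disj φ ψ) ↔ (sat M s φ ∨ sat M s ψ) := by
  simp [Form.disj]; tauto
@[simp] lemma sat_biff {M : BiModel} {s : M.S} {φ ψ : Form} :
    sat M s (Form.biff φ ψ) ↔ (sat M s φ ↔ sat M s ψ) := by
  simp [Form.biff]; tauto

open Classical in
lemma sat_of_taut {M : BiModel} {s : M.S} {φ : Form} (h : φ.isTaut) : sat M s φ := by
  classical
  have key : ∀ ψ : Form, beval (fun χ => decide (sat M s χ)) ψ = decide (sat M s ψ) := by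
    intro ψ
    induction ψ with
    | var n => rfl
    | neg φ ih =>
      simp [beval, ih, sat]
      by_cases hφ : sat M s φ <;> simp [hφ]
    | conj φ ψ ih1 ih2 =>
      simp [beval, ih1, ih2, sat]
      by_cases hφ : sat M s φ <;> by_cases hψ : sat M s ψ <;> simp [hφ, hψ]
    | pbox φ _ => rfl
  have := h (fun χ => decide (sat M s χ))
  rw [key φ] at this
  exact of_decide_eq_true this

lemma sound_thm {φ : Form} (h : KPThm φ) : ∀ (M : BiModel) (s : M.S), sat M s φ := by
  induction h with
  | taut h => exact fun M s => sat_of_taut h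
  | con φ ψ =>
    intro M s
    rw [sat_imp]
    rintro ⟨h1 | h1, h2 | h2⟩
    · exact ⟨Or.inl fun t ht => ⟨h1 t ht, h2 t ht⟩,
        Or.inl fun t ht => sat_disj.mpr (Or.inl (h1 t ht))⟩
    · refine ⟨Or.inr fun u hu => ?_, Or.inl fun t ht => sat_disj.mpr (Or.inl (h1 t ht))⟩
      rw [sat_conj]; rintro ⟨_, hψ⟩; exact h2 u hu hψ
    · refine ⟨Or.inr fun u hu => ?_, Or.inl fun t ht => sat_disj.mpr (Or.inr (h2 t ht))⟩
      rw [sat_conj]; rintro ⟨hφ, _⟩; exact h1 u hu hφ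
    · refine ⟨Or.inr fun u hu => ?_, Or.inr fun u hu => ?_⟩
      · rw [sat_conj]; rintro ⟨hφ, _⟩; exact h1 u hu hφ
      · rw [sat_disj]; rintro (hφ | hψ)
        · exact h1 u hu hφ
        · exact h2 u hu hψ
  | dis φ ψ χ =>
    intro M s
    rw [sat_imp, sat_pbox]
    rintro (h1 | h1)
    · rw [sat_disj]
      exact Or.inl (Or.inl fun t ht => sat_disj.mpr (Or.inl (h1 t ht)))
    · rw [sat_disj]
      refine Or.inr (Or.inr fun u hu => ?_)
      rw [sat_conj]; rintro ⟨hφ, _⟩; exact h1 u hu hφ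
  | mp h1 h2 ih1 ih2 =>
    intro M s
    exact (sat_imp.mp (ih1 M s)) (ih2 M s)
  | rn h ih =>
    intro M s
    exact ⟨Or.inl fun t _ => ih M t, Or.inr fun u _ => not_not.mpr (ih M u)⟩
  | re h ih =>
    intro M s
    rw [sat_biff]
    have he : ∀ t : M.S, sat M t _ ↔ sat M t _ := fun t => sat_biff.mp (ih M t)
    constructor <;> (rintro (h1 | h1))
    · exact Or.inl fun t ht => (he t).mp (h1 t ht)
    · exact Or.inr fun u hu hψ => h1 u hu ((he u).mpr hψ)
    · exact Or.inl fun t ht => (he t).mpr (h1 t ht)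
    · exact Or.inr fun u hu hφ => h1 u hu ((he u).mp hφ)

lemma sound {Γ : Set Form} {φ : Form} (h : PDeriv Γ φ) :
    ∀ (M : BiModel), SerialM M → ∀ s : M.S, (∀ γ ∈ Γ, sat M s γ) → sat M s φ := by
  induction h with
  | thm h => exact fun M _ s _ => sound_thm h M s
  | prem h => exact fun M _ s hs => hs _ h
  | mp _ _ ih1 ih2 =>
    intro M hM s hs
    exact (sat_imp.mp (ih1 M hM s hs)) (ih2 M hM s hs)

def trivModel : BiModel :=
  ⟨Unit, ⟨()⟩, fun _ _ => True, fun _ _ => True, fun _ => ∅⟩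

lemma cons_empty : Cons (∅ : Set Form) := by
  intro h
  have := sound_thm (pderiv_of_empty h (by simp)) trivModel ()
  simp [fls, sat, trivModel] at this

end KP
namespace KP

def lam (Δ : Set Form) : Set Form := {φ | Form.pbox φ ∈ Δ}
def Aset (Δ : Set Form) : Set Form := {φ | φ ∈ lam Δ ∧ ∀ ψ, φ.disj ψ ∈ lam Δ}
def Bset (Δ : Set Form) : Set Form := {φ | φ ∈ lam Δ ∧ ∀ χ, φ.conj χ ∈ lam Δ}

section canon
variable {Δ : Set Form} (hΔ : MCS Δ)
include hΔ

lemma lam_congr {α β : Form} (h : KPThm (α.biff β)) : α ∈ lam Δ ↔ β ∈ lam Δ :=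
  biff_mem hΔ (KPThm.re h)

lemma lam_thm {α : Form} (h : KPThm α) : α ∈ lam Δ ∧ α.neg ∈ lam Δ :=
  (conj_mem_iff hΔ).mp (thm_mem hΔ (KPThm.rn h))

lemma lam_con {α β : Form} (h1 : α ∈ lam Δ) (h2 : β ∈ lam Δ) :
    α.conj β ∈ lam Δ ∧ α.disj β ∈ lam Δ := by
  have hax := thm_mem hΔ (KPThm.con α β)
  have hpre : (Form.pbox α).conj (Form.pbox β) ∈ Δ := (conj_mem_iff hΔ).mpr ⟨h1, h2⟩
  exact (conj_mem_iff hΔ).mp (mp_mem hΔ hax hpre)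

lemma lam_split {α : Form} (h : α ∈ lam Δ) (ψ χ : Form) :
    α.disj ψ ∈ lam Δ ∨ α.conj χ ∈ lam Δ :=
  disj_elim_mem hΔ (mp_mem hΔ (thm_mem hΔ (KPThm.dis α ψ χ)) h)

lemma top_mem_A : top ∈ Aset Δ :=
  ⟨(lam_thm hΔ (kthm t_top)).1, fun _ => (lam_thm hΔ (kthm t_topdisj)).1⟩

lemma A_conj {α β : Form} (h1 : α ∈ Aset Δ) (h2 : β ∈ Aset Δ) : α.conj β ∈ Aset Δ := by
  refine ⟨(lam_con hΔ h1.1 h2.1).1, fun ψ => ?_⟩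
  exact (lam_congr hΔ (kthm t_distrib1)).mpr (lam_con hΔ (h1.2 ψ) (h2.2 ψ)).1

lemma A_up {c θ : Form} (h : KPThm (c.imp θ)) (hc : c ∈ Aset Δ) : θ ∈ Aset Δ := by
  refine ⟨?_, fun ψ => ?_⟩
  · exact (lam_congr hΔ (KPThm.mp (kthm t_up1) h)).mpr (hc.2 θ)
  · exact (lam_congr hΔ (KPThm.mp (kthm t_up2) h)).mpr (hc.2 (θ.disj ψ))

lemma conjList_mem_A : ∀ L : List Form, (∀ x ∈ L, x ∈ Aset Δ) → conjList L ∈ Aset Δ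
  | [], _ => top_mem_A hΔ
  | a :: L, h =>
    A_conj hΔ (h a (by simp)) (conjList_mem_A L (fun x hx => h x (by simp [hx])))

lemma A_dedclosed {θ : Form} (h : PDeriv (Aset Δ) θ) : θ ∈ Aset Δ := by
  obtain ⟨F, hF, hdF⟩ := compact h
  have hset : {x | x ∈ F.toList} = (↑F : Set Form) := by ext x; simp
  have hd2 : PDeriv {x | x ∈ F.toList} θ := by rw [hset]; exact hdF
  have hk := deriv_list F.toList hd2
  have hcl : conjList F.toList ∈ Aset Δ :=
    conjList_mem_A hΔ _ (fun x hx => hF (by simpa using hx))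
  exact A_up hΔ hk hcl

lemma fls_mem_B : fls ∈ Bset Δ :=
  ⟨(lam_congr hΔ (kthm t_fls_negtop)).mpr (lam_thm hΔ (kthm t_top)).2,
   fun _ => (lam_congr hΔ (kthm t_flsconj)).mpr (lam_thm hΔ (kthm t_top)).2⟩

lemma B_disj {α β : Form} (h1 : α ∈ Bset Δ) (h2 : β ∈ Bset Δ) : α.disj β ∈ Bset Δ := by
  refine ⟨(lam_con hΔ h1.1 h2.1).2, fun χ => ?_⟩
  exact (lam_congr hΔ (kthm t_distrib2)).mpr (lam_con hΔ (h1.2 χ) (h2.2 χ)).2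

lemma B_down {θ d : Form} (h : KPThm (θ.imp d)) (hd : d ∈ Bset Δ) : θ ∈ Bset Δ := by
  refine ⟨?_, fun χ => ?_⟩
  · exact (lam_congr hΔ (KPThm.mp (kthm t_down1) h)).mpr (hd.2 θ)
  · exact (lam_congr hΔ (KPThm.mp (kthm t_down2) h)).mpr (hd.2 (θ.conj χ))

lemma disjList_mem_B : ∀ L : List Form, (∀ x ∈ L, x ∈ Bset Δ) → disjList L ∈ Bset Δ
  | [], _ => fls_mem_B hΔ
  | a :: L, h =>
    B_disj hΔ (h a (by simp)) (disjList_mem_B L (fun x hx => h x (by simp [hx])))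

lemma lam_subset_AB {α : Form} (h : α ∈ lam Δ) : α ∈ Aset Δ ∨ α ∈ Bset Δ := by
  by_contra hn
  push_neg at hn
  obtain ⟨hA, hB⟩ := hn
  have h1 : ∃ ψ, α.disj ψ ∉ lam Δ := by
    by_contra h2; push_neg at h2; exact hA ⟨h, h2⟩
  have h2 : ∃ χ, α.conj χ ∉ lam Δ := by
    by_contra h2; push_neg at h2; exact hB ⟨h, h2⟩
  obtain ⟨ψ, hψ⟩ := h1
  obtain ⟨χ, hχ⟩ := h2
  rcases lam_split hΔ h ψ χ with hd | hd
  · exact hψ hd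
  · exact hχ hd

lemma A_cons (hne : lam Δ ≠ Set.univ) : Cons (Aset Δ) := by
  intro hd
  apply hne
  have hfls : fls ∈ Aset Δ := A_dedclosed hΔ hd
  ext ψ; simp only [Set.mem_univ, iff_true]
  exact (lam_congr hΔ (kthm t_flsdisj)).mp (hfls.2 ψ)

lemma top_not_B (hne : lam Δ ≠ Set.univ) : top ∉ Bset Δ := by
  intro h
  apply hne
  ext χ; simp only [Set.mem_univ, iff_true]
  have h2 : KPThm ((top.conj χ).biff χ) := KPThm.mp (kthm t_topconj) (kthm t_top)
  exact (lam_congr hΔ h2).mp (h.2 χ)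

end canon

def unneg : Form → Form
  | .neg β => β
  | φ => φ

lemma B_insert_cons {Δ : Set Form} (hΔ : MCS Δ) {p : Form} (hp : p ∉ Bset Δ) :
    Cons (insert p (Form.neg '' Bset Δ)) := by
  intro hd
  have hd1 : PDeriv (Form.neg '' Bset Δ) (p.imp fls) := deduction hd
  obtain ⟨F, hF, hdF⟩ := compact hd1
  set L : List Form := F.toList.map unneg with hL
  have hmem : ∀ x ∈ F, x = Form.neg (unneg x) ∧ unneg x ∈ Bset Δ := by
    intro x hx
    obtain ⟨β, hβ, rfl⟩ := hF (by exact_mod_cast hx)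
    exact ⟨rfl, by simpa [unneg] using hβ⟩
  have hsub : (↑F : Set Form) ⊆ {y | y ∈ L.map Form.neg} := by
    intro x hx
    have hx' : x ∈ F := by exact_mod_cast hx
    have h2 : unneg x ∈ L := List.mem_map_of_mem (Finset.mem_toList.mpr hx')
    have h3 : Form.neg (unneg x) ∈ L.map Form.neg := List.mem_map_of_mem h2
    rw [← (hmem x hx').1] at h3
    exact h3
  have hd2 : PDeriv {y | y ∈ L.map Form.neg} (p.imp fls) := pd_mono hdF hsub
  have hk2 := neg_list L p (deriv_list _ hd2)
  have hdL : disjList L ∈ Bset Δ := by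
    apply disjList_mem_B hΔ
    intro x hx
    obtain ⟨y, hy, rfl⟩ := List.mem_map.mp hx
    exact (hmem y (Finset.mem_toList.mp hy)).2
  exact hp (B_down hΔ hk2 hdL)

def canR1 (Δ Θ : {Δ : Set Form // MCS Δ}) : Prop :=
  (lam Δ.1 = Set.univ ∧ Θ = Δ) ∨ (lam Δ.1 ≠ Set.univ ∧ Aset Δ.1 ⊆ Θ.1)
def canR2 (Δ Θ : {Δ : Set Form // MCS Δ}) : Prop :=
  (lam Δ.1 = Set.univ ∧ Θ = Δ) ∨ (lam Δ.1 ≠ Set.univ ∧ ∀ β ∈ Bset Δ.1, β ∉ Θ.1)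

lemma exists_mcs : Nonempty {Δ : Set Form // MCS Δ} := by
  obtain ⟨Δ, _, hm⟩ := lindenbaum cons_empty
  exact ⟨⟨Δ, hm⟩⟩

def canM : BiModel :=
  ⟨{Δ : Set Form // MCS Δ}, exists_mcs, canR1, canR2,
    fun n => {Δ | Form.var n ∈ Δ.1}⟩

lemma canM_serial : SerialM canM := by
  constructor
  · rintro ⟨Δ, hΔ⟩
    by_cases hu : lam Δ = Set.univ
    · exact ⟨⟨Δ, hΔ⟩, Or.inl ⟨hu, rfl⟩⟩
    · obtain ⟨Θ, hsub, hΘ⟩ := lindenbaum (A_cons hΔ hu)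
      exact ⟨⟨Θ, hΘ⟩, Or.inr ⟨hu, hsub⟩⟩
  · rintro ⟨Δ, hΔ⟩
    by_cases hu : lam Δ = Set.univ
    · exact ⟨⟨Δ, hΔ⟩, Or.inl ⟨hu, rfl⟩⟩
    · obtain ⟨Θ, hsub, hΘ⟩ := lindenbaum (B_insert_cons hΔ (top_not_B hΔ hu))
      refine ⟨⟨Θ, hΘ⟩, Or.inr ⟨hu, fun β hβ => ?_⟩⟩
      exact (neg_mem_iff hΘ).mp (hsub (Set.mem_insert_of_mem _ ⟨β, hβ, rfl⟩))

lemma pbox_mem_iff (Δ0 : canM.S) (φ : Form) :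
    Form.pbox φ ∈ Δ0.1 ↔
      ((∀ Θ : canM.S, canM.R1 Δ0 Θ → φ ∈ Θ.1) ∨
       (∀ Θ : canM.S, canM.R2 Δ0 Θ → φ ∉ Θ.1)) := by
  obtain ⟨Δ, hΔ⟩ := Δ0
  by_cases hu : lam Δ = Set.univ
  · constructor
    · intro _
      by_cases hφ : φ ∈ Δ
      · left; rintro Θ (⟨_, rfl⟩ | ⟨hne, _⟩)
        · exact hφ
        · exact absurd hu hne
      · right; rintro Θ (⟨_, rfl⟩ | ⟨hne, _⟩)
        · exact hφ
        · exact absurd hu hne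
    · intro _
      show φ ∈ lam Δ
      rw [hu]; trivial
  · constructor
    · intro h
      rcases lam_subset_AB hΔ h with hA | hB
      · left; rintro Θ (⟨hu', _⟩ | ⟨_, hsub⟩)
        · exact absurd hu' hu
        · exact hsub hA
      · right; rintro Θ (⟨hu', _⟩ | ⟨_, havoid⟩)
        · exact absurd hu' hu
        · exact havoid φ hB
    · rintro (h | h)
      · have hφA : φ ∈ Aset Δ := by
          by_contra hn
          have hc : Cons (insert (Form.neg φ) (Aset Δ)) := by
            intro hd
            exact hn (A_dedclosed hΔ (PDeriv.mp (pd_taut t_dne) (deduction hd)))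
          obtain ⟨Θ, hsub, hΘ⟩ := lindenbaum hc
          have h1 : φ ∈ Θ :=
            h ⟨Θ, hΘ⟩ (Or.inr ⟨hu, fun x hx => hsub (Set.mem_insert_of_mem _ hx)⟩)
          exact (neg_mem_iff hΘ).mp (hsub (Set.mem_insert _ _)) h1
        exact hφA.1
      · have hφB : φ ∈ Bset Δ := by
          by_contra hn
          obtain ⟨Θ, hsub, hΘ⟩ := lindenbaum (B_insert_cons hΔ hn)
          have h1 : φ ∉ Θ :=
            h ⟨Θ, hΘ⟩ (Or.inr ⟨hu, fun β hβ =>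
              (neg_mem_iff hΘ).mp (hsub (Set.mem_insert_of_mem _ ⟨β, hβ, rfl⟩))⟩)
          exact h1 (hsub (Set.mem_insert _ _))
        exact hφB.1

lemma truth (φ : Form) : ∀ Δ : canM.S, sat canM Δ φ ↔ φ ∈ Δ.1 := by
  induction φ with
  | var n => intro Δ; exact Iff.rfl
  | neg φ ih =>
    intro Δ
    rw [sat_neg, ih Δ]
    exact (neg_mem_iff Δ.2).symm
  | conj φ ψ ih1 ih2 =>
    intro Δ
    rw [sat_conj, ih1 Δ, ih2 Δ]
    exact (conj_mem_iff Δ.2).symm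
  | pbox φ ih =>
    intro Δ
    rw [sat_pbox, pbox_mem_iff Δ φ]
    constructor
    · rintro (h | h)
      · exact Or.inl fun t ht => (ih t).mp (h t ht)
      · exact Or.inr fun u hu hm => h u hu ((ih u).mpr hm)
    · rintro (h | h)
      · exact Or.inl fun t ht => (ih t).mpr (h t ht)
      · exact Or.inr fun u hu hs => h u hu ((ih u).mp hs)

end KP
/-- K⊞ is sound and strongly complete with respect to the class of serial
bimodal frames. -/
theorem stmt10 (Γ : Set Form) (φ : Form) :
    PDeriv Γ φ ↔
      ∀ (M : BiModel), SerialM M →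
        ∀ s : M.S, (∀ γ ∈ Γ, sat M s γ) → sat M s φ := by
  constructor
  · intro h M hM s hs
    exact KP.sound h M hM s hs
  · intro h
    by_contra hnd
    have hc : KP.Cons (insert (Form.neg φ) Γ) := by
      intro hd
      exact hnd (PDeriv.mp (KP.pd_taut KP.t_dne) (KP.deduction hd))
    obtain ⟨Δ, hsub, hΔ⟩ := KP.lindenbaum hc
    have hsat := h KP.canM KP.canM_serial ⟨Δ, hΔ⟩
      (fun γ hγ => (KP.truth γ ⟨Δ, hΔ⟩).mpr (hsub (Set.mem_insert_of_mem _ hγ)))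
    exact (KP.neg_mem_iff hΔ).mp (hsub (Set.mem_insert _ _))
      ((KP.truth φ ⟨Δ, hΔ⟩).mp hsat)
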